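/- The category of sheaves of abelian groups on a topological space has enough injectives: every sheaf of abelian groups embeds into an injective sheaf. -/

import Mathlib

open Classical CategoryTheory CategoryTheory.Limits TopCat TopCat.Presheaf Opposite

noncomputable section

universe u

/-- The category of sheaves of abelian groups on a topological space has enough
injectives. -/
theorem stmt_10 (X : TopCat.{u}) :
    EnoughInjectives (TopCat.Sheaf AddCommGrpCat.{u} X) := by
  constructor
  intro F
  let I : X → AddCommGrpCat.{u} := fun x => Injective.under (F.presheaf.stalk x)
  let Sky : X → TopCat.Sheaf AddCommGrpCat.{u} X := fun x => skyscraperSheaf x (I x)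
  have hinj : ∀ x : X, Injective (Sky x) := fun x =>
    Injective.injective_of_adjoint (stalkSkyscraperSheafAdjunction x) (I x)
  have : HasProduct Sky := inferInstance
  let J : TopCat.Sheaf AddCommGrpCat.{u} X := ∏ᶜ Sky
  let g : ∀ x : X, F ⟶ Sky x := fun x =>
    (stalkSkyscraperSheafAdjunction x).homEquiv F (I x) (Injective.ι (F.presheaf.stalk x))
  let f : F ⟶ J := Pi.lift g
  have hf : Mono f := by
    refine ⟨fun {Z} a b hab => ?_⟩
    have key : ∀ x : X, (Presheaf.stalkFunctor AddCommGrpCat.{u} x).map a.hom =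
        (Presheaf.stalkFunctor AddCommGrpCat.{u} x).map b.hom := by
      intro x
      have h1 : a ≫ g x = b ≫ g x := by
        have := congrArg (fun t => t ≫ Pi.π Sky x) hab
        simpa [f, Category.assoc] using this
      have h2 := congrArg ((stalkSkyscraperSheafAdjunction (C := AddCommGrpCat.{u}) x).homEquiv Z (I x)).symm h1
      have n1 := Adjunction.homEquiv_naturality_left_symm (stalkSkyscraperSheafAdjunction (C := AddCommGrpCat.{u}) x) a (g x)
      have n2 := Adjunction.homEquiv_naturality_left_symm (stalkSkyscraperSheafAdjunction (C := AddCommGrpCat.{u}) x) b (g x)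
      have k := ((stalkSkyscraperSheafAdjunction (C := AddCommGrpCat.{u}) x).homEquiv F (I x)).symm_apply_apply (Injective.ι (F.presheaf.stalk x))
      simp only [g] at n1 n2
      rw [k] at n1 n2
      refine (cancel_mono (Injective.ι (F.presheaf.stalk x))).mp ?_
      exact n1.symm.trans (h2.trans n2)
    refine Sheaf.hom_ext ?_
    apply NatTrans.ext
    funext U
    apply AddCommGrpCat.ext
    intro s
    induction U using Opposite.rec with
    | op U =>
      apply TopCat.Presheaf.section_ext F
      intro x hx
      have ha := stalkFunctor_map_germ_apply U x hx a.hom s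
      have hb := stalkFunctor_map_germ_apply U x hx b.hom s
      rw [← ha, ← hb, key x]
  exact ⟨⟨J, inferInstance, f, hf⟩⟩
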